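/- Let $L$ be a unimodular lattice of rank $r$ (a free $\mathbb{Z}$-module with a unimodular symmetric bilinear form) and let $N \subseteq L$ be spanned by $k$ pairwise orthogonal vectors of square $-3$. Define $\sigma = k - \dim_{\mathbb{F}_3} \mathrm{Image}[N \otimes \mathbb{F}_3 \to L \otimes \mathbb{F}_3]$. Then $k - r/2 \leq \sigma \leq k/2$. -/

import Mathlib

open Module LinearMap

/-- A totally isotropic subspace for a nondegenerate reflexive bilinear form has
dimension at most half the dimension of the space. -/
lemma isotropic_two_mul_finrank_le {F V : Type*} [Field F] [AddCommGroup V] [Module F V]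
    [FiniteDimensional F V] (B : LinearMap.BilinForm F V)
    (hB : B.Nondegenerate) (hrefl : B.IsRefl) (W : Submodule F V)
    (hW : ∀ x ∈ W, ∀ y ∈ W, B x y = 0) :
    2 * finrank F W ≤ finrank F V := by
  have h1 : W ≤ B.orthogonal W := by
    intro x hx
    rw [LinearMap.BilinForm.mem_orthogonal_iff]
    intro n hn
    exact hW n hn x hx
  have h2 : finrank F W ≤ finrank F (B.orthogonal W) := Submodule.finrank_mono h1
  have h3 := LinearMap.BilinForm.finrank_orthogonal hB W
  have h4 : finrank F W ≤ finrank F V := Submodule.finrank_le W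
  omega

/-- Lemma 5.1: for a unimodular symmetric bilinear form `B` of rank `r` over `ℤ` and
`k` pairwise orthogonal vectors of square `-3`, the defect
`σ = k - dim_𝔽₃ Image[N ⊗ 𝔽₃ → L ⊗ 𝔽₃]` satisfies `k - r/2 ≤ σ ≤ k/2`. -/
theorem defect_bounds (r k : ℕ) (B : Matrix (Fin r) (Fin r) ℤ)
    (hsym : B.IsSymm) (hunimod : IsUnit B.det)
    (v : Fin k → Fin r → ℤ)
    (hdiag : ∀ i, dotProduct (v i) (B.mulVec (v i)) = -3)
    (horth : ∀ i j, i ≠ j → dotProduct (v i) (B.mulVec (v j)) = 0) :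
    (k : ℚ) - r / 2 ≤
      (k : ℚ) - (Module.finrank (ZMod 3)
        (Submodule.span (ZMod 3)
          (Set.range fun i : Fin k => fun j : Fin r => ((v i j : ZMod 3))))) ∧
    (k : ℚ) - (Module.finrank (ZMod 3)
        (Submodule.span (ZMod 3)
          (Set.range fun i : Fin k => fun j : Fin r => ((v i j : ZMod 3))))) ≤
      (k : ℚ) / 2 := by
  classical
  set vb : Fin k → Fin r → ZMod 3 := fun i => fun j => ((v i j : ZMod 3)) with hvb
  set W : Submodule (ZMod 3) (Fin r → ZMod 3) := Submodule.span (ZMod 3) (Set.range vb) with hW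
  set d : ℕ := finrank (ZMod 3) W with hd
  -- the reduced matrix
  set M3 : Matrix (Fin r) (Fin r) (ZMod 3) := (Int.castRingHom (ZMod 3)).mapMatrix B with hM3
  have hdet3 : M3.det ≠ 0 := by
    have : M3.det = ((B.det : ℤ) : ZMod 3) := ((Int.castRingHom (ZMod 3)).map_det B).symm
    rw [this]
    have : IsUnit ((B.det : ℤ) : ZMod 3) := hunimod.map (Int.castRingHom (ZMod 3))
    exact this.ne_zero
  -- the reduced bilinear form
  set B3 : LinearMap.BilinForm (ZMod 3) (Fin r → ZMod 3) :=
    Matrix.toLinearMap₂' (ZMod 3) M3 with hB3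
  have hB3apply : ∀ x y, B3 x y = dotProduct x (M3.mulVec y) := fun x y =>
    Matrix.toLinearMap₂'_apply' M3 x y
  have hM3symm : M3.IsSymm := by
    rw [hM3]
    ext i j
    simp only [Matrix.transpose_apply, RingHom.mapMatrix_apply, Matrix.map_apply]
    rw [← Matrix.transpose_apply (M := B), hsym.eq]
  have hB3symm : B3.IsSymm := by
    rw [LinearMap.BilinForm.isSymm_iff, LinearMap.isSymm_def]
    intro x y
    simp only [RingHom.id_apply]
    rw [hB3apply, hB3apply, Matrix.dotProduct_mulVec, ← hM3symm.eq, Matrix.vecMul_transpose,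
      dotProduct_comm, hM3symm.eq]
  have hB3refl : B3.IsRefl := hB3symm.isRefl
  have hB3nondeg : B3.Nondegenerate :=
    (Matrix.nondegenerate_of_det_ne_zero hdet3).toLinearMap₂'
  -- key arithmetic: B3 of reductions vanishes pairwise
  have hkey : ∀ i i', B3 (vb i) (vb i') = 0 := by
    intro i i'
    have : B3 (vb i) (vb i') =
        ((dotProduct (v i) (B.mulVec (v i')) : ℤ) : ZMod 3) := by
      rw [hB3apply]
      simp only [dotProduct, Matrix.mulVec, hM3, RingHom.mapMatrix_apply,
        Matrix.map_apply, Int.coe_castRingHom]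
      push_cast
      rfl
    rw [this]
    rcases eq_or_ne i i' with rfl | h
    · rw [hdiag i]; decide
    · rw [horth i i' h]; simp
  -- W is totally isotropic
  have hWiso : ∀ x ∈ W, ∀ y ∈ W, B3 x y = 0 := by
    intro x hx y hy
    induction hx using Submodule.span_induction with
    | mem x hxm =>
      induction hy using Submodule.span_induction with
      | mem y hym =>
        obtain ⟨i, rfl⟩ := hxm
        obtain ⟨i', rfl⟩ := hym
        exact hkey i i'
      | zero => simp
      | add a b _ _ ha hb => simp [ha, hb]
      | smul c a _ ha => simp [ha]
    | zero => simp
    | add a b _ _ ha hb => simp [map_add, ha, hb]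
    | smul c a _ ha => simp [map_smul, ha]
  -- First bound: 2 * d ≤ r
  have hfirst : 2 * d ≤ r := by
    have := isotropic_two_mul_finrank_le B3 hB3nondeg hB3refl W hWiso
    simpa using this
  -- Second bound: 2 * (k - d) ≤ k, via the kernel of the linear combination map
  set ℓ : (Fin k → ZMod 3) →ₗ[ZMod 3] (Fin r → ZMod 3) :=
    Fintype.linearCombination (ZMod 3) vb with hℓ
  have hrange : LinearMap.range ℓ = W := Fintype.range_linearCombination (ZMod 3) vb
  have hrn : finrank (ZMod 3) (LinearMap.range ℓ) + finrank (ZMod 3) (LinearMap.ker ℓ) = k := by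
    have := LinearMap.finrank_range_add_finrank_ker ℓ
    simpa using this
  have hdk : d ≤ k := by rw [hd, ← hrange] at *; omega
  set e : ℕ := finrank (ZMod 3) (LinearMap.ker ℓ) with he
  have hde : d + e = k := by rw [hd, ← hrange]; exact hrn
  -- the standard form on Fin k
  set Bk : LinearMap.BilinForm (ZMod 3) (Fin k → ZMod 3) :=
    Matrix.toLinearMap₂' (ZMod 3) (1 : Matrix (Fin k) (Fin k) (ZMod 3)) with hBk
  have hBkapply : ∀ x y, Bk x y = dotProduct x y := by
    intro x y
    rw [hBk, Matrix.toLinearMap₂'_apply', Matrix.one_mulVec]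
  have hBknondeg : Bk.Nondegenerate := by
    apply Matrix.Nondegenerate.toLinearMap₂'
    apply Matrix.nondegenerate_of_det_ne_zero
    simp
  have hBkrefl : Bk.IsRefl := by
    intro x y h
    rw [hBkapply] at h ⊢
    rwa [dotProduct_comm]
  -- ker ℓ is totally isotropic for the standard form
  have hkeriso : ∀ x ∈ LinearMap.ker ℓ, ∀ y ∈ LinearMap.ker ℓ, Bk x y = 0 := by
    intro x hx y hy
    rw [hBkapply]
    -- integer lifts
    set xz : Fin k → ℤ := fun i => ((x i).val : ℤ) with hxz
    set yz : Fin k → ℤ := fun i => ((y i).val : ℤ) with hyz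
    have hxcast : ∀ i, ((xz i : ℤ) : ZMod 3) = x i := by
      intro i; simp [hxz, ZMod.natCast_val, ZMod.cast_id]
    have hycast : ∀ i, ((yz i : ℤ) : ZMod 3) = y i := by
      intro i; simp [hyz, ZMod.natCast_val, ZMod.cast_id]
    set u : Fin r → ℤ := fun j => ∑ i, xz i * v i j with hu
    set w : Fin r → ℤ := fun j => ∑ i, yz i * v i j with hw
    have hker_of : ∀ (z : Fin k → ZMod 3), ℓ z = 0 → ∀ j, (3 : ℤ) ∣ ∑ i, ((z i).val : ℤ) * v i j := by
      intro z hz j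
      have h0 : (∑ i, z i • vb i) j = 0 := by
        rw [← Fintype.linearCombination_apply (R := ZMod 3) vb z, hz]; rfl
      have h1 : ((∑ i, ((z i).val : ℤ) * v i j : ℤ) : ZMod 3) = 0 := by
        push_cast
        simp only [ZMod.natCast_val, ZMod.cast_id]
        simpa [Finset.sum_apply, Pi.smul_apply, smul_eq_mul, hvb] using h0
      exact (ZMod.intCast_zmod_eq_zero_iff_dvd _ 3).mp h1
    have hu3 : ∀ j, (3 : ℤ) ∣ u j := hker_of x (LinearMap.mem_ker.mp hx)
    have hw3 : ∀ j, (3 : ℤ) ∣ w j := hker_of y (LinearMap.mem_ker.mp hy)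
    choose u' hu' using hu3
    choose w' hw' using hw3
    -- integer bilinear form
    set Bz : LinearMap.BilinForm ℤ (Fin r → ℤ) := Matrix.toLinearMap₂' ℤ B with hBz
    have hBzapply : ∀ a b, Bz a b = dotProduct a (B.mulVec b) := fun a b =>
      Matrix.toLinearMap₂'_apply' B a b
    have husum : u = ∑ i, xz i • v i := by
      ext j; simp [hu, Finset.sum_apply]
    have hwsum : w = ∑ i, yz i • v i := by
      ext j; simp [hw, Finset.sum_apply]
    have hexp : Bz u w = -3 * ∑ i, xz i * yz i := by
      have hsum : Bz u w = ∑ i, ∑ i', xz i * (yz i' * Bz (v i) (v i')) := by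
        rw [husum, hwsum, LinearMap.map_sum₂]
        refine Finset.sum_congr rfl fun i _ => ?_
        rw [LinearMap.BilinForm.smul_left, map_sum, Finset.mul_sum]
        refine Finset.sum_congr rfl fun i' _ => ?_
        rw [LinearMap.BilinForm.smul_right]
      rw [hsum, Finset.mul_sum]
      refine Finset.sum_congr rfl fun i _ => ?_
      rw [Finset.sum_eq_single i]
      · rw [hBzapply, hdiag i]; ring
      · intro b _ hb
        rw [hBzapply, horth i b (Ne.symm hb)]; ring
      · intro hi; exact absurd (Finset.mem_univ i) hi
    have hu9 : u = fun j => 3 * u' j := funext hu'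
    have hw9 : w = fun j => 3 * w' j := funext hw'
    have hnine : Bz u w = 9 * Bz u' w' := by
      have h3u : u = (3 : ℤ) • u' := by ext j; simp [hu' j]
      have h3w : w = (3 : ℤ) • w' := by ext j; simp [hw' j]
      rw [h3u, h3w, LinearMap.BilinForm.smul_left, LinearMap.BilinForm.smul_right]
      ring
    have hdvd : (3 : ℤ) ∣ ∑ i, xz i * yz i := by
      have h9 : (-3 : ℤ) * ∑ i, xz i * yz i = 9 * Bz u' w' := by rw [← hexp, hnine]
      refine ⟨-(Bz u' w'), ?_⟩
      linarith
    have : ((∑ i, xz i * yz i : ℤ) : ZMod 3) = 0 :=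
      (ZMod.intCast_zmod_eq_zero_iff_dvd _ 3).mpr hdvd
    calc dotProduct x y = ∑ i, x i * y i := rfl
      _ = ((∑ i, xz i * yz i : ℤ) : ZMod 3) := by
          push_cast
          exact Finset.sum_congr rfl fun i _ => by rw [hxcast i, hycast i]
      _ = 0 := this
  have hsecond : 2 * e ≤ k := by
    have := isotropic_two_mul_finrank_le Bk hBknondeg hBkrefl (LinearMap.ker ℓ) hkeriso
    simpa using this
  -- conclude
  clear_value d e
  constructor
  · have h1 : (2 * (d : ℚ)) ≤ r := by exact_mod_cast hfirst
    linarith only [h1]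
  · have h2 : (d : ℚ) + e = k := by exact_mod_cast hde
    have h3 : (2 * (e : ℚ)) ≤ k := by exact_mod_cast hsecond
    linarith only [h2, h3]
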